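/- Let X be a compact Hausdorff space, μ a finite regular Borel measure on X, and B ⊆ X a closed subset. Let K be the closure in L²(X,μ;ℂ) of the set of (classes of) continuous functions vanishing on B. Then the orthogonal projection of the constant function 1 onto the orthogonal complement K^⊥ is the a.e.-class of the indicator function of B; consequently, for every continuous g : X → ℂ, the inner product ⟨P_{K^⊥}(1), g⟩ in L²(X,μ;ℂ) equals ∫_B g dμ, the integral of g over B with respect to the conditional measure μ_B. (This identifies the quantum conditional measure (φ_μ)_I on C(X)/I with the classical conditional measure φ_{μ_B}.) -/

import Mathlib

open MeasureTheory ComplexInnerProductSpace ENNReal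

set_option synthInstance.maxHeartbeats 1000000

set_option maxHeartbeats 1000000 in
/-- Let `K` be the closure in `L²(X,μ;ℂ)` of the continuous functions vanishing on the
closed set `B`. Then the orthogonal projection of the constant function `1` onto `Kᗮ` is
the a.e.-class of the indicator of `B`, and consequently `⟪P_{Kᗮ} 1, g⟫ = ∫_B g dμ` for
every continuous `g`. -/
theorem stmt_14 {X : Type*} [TopologicalSpace X] [CompactSpace X] [T2Space X]
    [MeasurableSpace X] [BorelSpace X]
    (μ : Measure X) [IsFiniteMeasure μ] [μ.Regular] (B : Set X) (hB : IsClosed B)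
    (K : Submodule ℂ (Lp ℂ 2 μ))
    (hK : (K : Set (Lp ℂ 2 μ)) =
      closure ((fun f : C(X, ℂ) => ContinuousMap.toLp 2 μ ℂ f) ''
        {f : C(X, ℂ) | ∀ x ∈ B, f x = 0})) :
    (((Submodule.orthogonalProjectionOnto Kᗮ
          ((memLp_const (1 : ℂ)).toLp fun _ => (1 : ℂ)) : Lp ℂ 2 μ) : X → ℂ)
        =ᵐ[μ] B.indicator fun _ => (1 : ℂ)) ∧
    ∀ g : C(X, ℂ),
      ⟪((Submodule.orthogonalProjectionOnto Kᗮ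
            ((memLp_const (1 : ℂ)).toLp fun _ => (1 : ℂ)) : Lp ℂ 2 μ)),
        ContinuousMap.toLp 2 μ ℂ g⟫ = ∫ x in B, g x ∂μ := by
  have hBmeas : MeasurableSet B := hB.measurableSet
  have hμB : μ B ≠ ⊤ := measure_ne_top μ B
  set u : Lp ℂ 2 μ := (memLp_const (1 : ℂ)).toLp fun _ => (1 : ℂ) with hu
  set v : Lp ℂ 2 μ := indicatorConstLp 2 hBmeas hμB (1 : ℂ) with hv
  -- v ∈ Kᗮ
  have hvK : v ∈ Kᗮ := by
    rw [Submodule.mem_orthogonal]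
    intro w hw
    rw [← SetLike.mem_coe, hK] at hw
    have hcont : Continuous fun w : Lp ℂ 2 μ => (⟪w, v⟫ : ℂ) :=
      continuous_id.inner continuous_const
    have hclosed : IsClosed {w : Lp ℂ 2 μ | (⟪w, v⟫ : ℂ) = 0} :=
      isClosed_eq hcont continuous_const
    refine hclosed.closure_subset_iff.2 ?_ hw
    rintro _ ⟨f, hf, rfl⟩
    have h1 : (⟪v, ContinuousMap.toLp 2 μ ℂ f⟫ : ℂ) = ∫ x in B, (ContinuousMap.toLp 2 μ ℂ f) x ∂μ :=
      L2.inner_indicatorConstLp_one hBmeas hμB _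
    have h2 : ∫ x in B, (ContinuousMap.toLp 2 μ ℂ f) x ∂μ = ∫ x in B, f x ∂μ :=
      setIntegral_congr_ae hBmeas ((ContinuousMap.coeFn_toLp (𝕜 := ℂ) μ f).mono fun x hx _ => hx)
    have h3 : ∫ x in B, f x ∂μ = 0 := by
      rw [setIntegral_congr_fun hBmeas (fun x hx => hf x hx)]
      simp
    show (⟪ContinuousMap.toLp 2 μ ℂ f, v⟫ : ℂ) = 0
    rw [← inner_conj_symm, h1, h2, h3, map_zero]
  -- u - v is the indicator of `Bᶜ`
  have huv : u - v = indicatorConstLp 2 hBmeas.compl (measure_ne_top μ Bᶜ) (1 : ℂ) := by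
    apply Lp.ext
    filter_upwards [Lp.coeFn_sub u v, MemLp.coeFn_toLp (memLp_const (1 : ℂ)),
      indicatorConstLp_coeFn (μ := μ) (hs := hBmeas) (hμs := hμB) (c := (1 : ℂ)),
      indicatorConstLp_coeFn (μ := μ) (hs := hBmeas.compl) (hμs := measure_ne_top μ Bᶜ)
        (c := (1 : ℂ))] with x h1 h2 h3 h4
    rw [h1, h4, Pi.sub_apply]
    have h2' : u x = 1 := h2
    rw [h2', h3]
    by_cases hx : x ∈ B <;> simp [Set.indicator, hx]
  -- u - v ∈ K
  have huvK : u - v ∈ K := by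
    rw [huv, ← SetLike.mem_coe, hK, Metric.mem_closure_iff]
    intro ε hε
    have hδ0 : ((ENNReal.ofReal ε) ^ 2 : ℝ≥0∞) ≠ 0 :=
      pow_ne_zero _ (ENNReal.ofReal_pos.2 hε).ne'
    obtain ⟨F, hFsub, hFcomp, hFlt⟩ :=
      hBmeas.compl.exists_isCompact_lt_add (measure_ne_top μ Bᶜ) hδ0
    have hdisj : Disjoint B F := Set.disjoint_left.2 fun x hxB hxF => (hFsub hxF) hxB
    obtain ⟨f, hf0, hf1, hf01⟩ :=
      exists_continuous_zero_one_of_isClosed hB hFcomp.isClosed hdisj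
    set fc : C(X, ℂ) := ⟨fun x => (f x : ℂ), Complex.continuous_ofReal.comp f.continuous⟩ with hfc
    refine ⟨ContinuousMap.toLp 2 μ ℂ fc, ⟨fc, fun x hx => by simp [hfc, hf0 hx], rfl⟩, ?_⟩
    rw [dist_eq_norm, Lp.norm_def]
    have hμS : μ (Bᶜ \ F) < (ENNReal.ofReal ε) ^ 2 :=
      measure_diff_lt_of_lt_add hFcomp.isClosed.measurableSet.nullMeasurableSet hFsub
        (measure_ne_top μ F) hFlt
    have key : eLpNorm (⇑(indicatorConstLp 2 hBmeas.compl (measure_ne_top μ Bᶜ) (1 : ℂ))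
        - ⇑(ContinuousMap.toLp 2 μ ℂ fc)) 2 μ < ENNReal.ofReal ε := by
      have hle : eLpNorm (⇑(indicatorConstLp 2 hBmeas.compl (measure_ne_top μ Bᶜ) (1 : ℂ))
          - ⇑(ContinuousMap.toLp 2 μ ℂ fc)) 2 μ
          ≤ eLpNorm ((Bᶜ \ F).indicator fun _ => (1 : ℝ)) 2 μ := by
        apply eLpNorm_mono_ae
        filter_upwards [indicatorConstLp_coeFn (μ := μ) (hs := hBmeas.compl)
          (hμs := measure_ne_top μ Bᶜ) (c := (1 : ℂ)),
          ContinuousMap.coeFn_toLp (p := 2) (𝕜 := ℂ) μ fc] with x h1 h2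
        rw [Pi.sub_apply, h1, h2]
        by_cases hxB : x ∈ B
        · have hxc : x ∉ Bᶜ := by simpa using hxB
          rw [Set.indicator_of_notMem hxc, Set.indicator_of_notMem (fun h => hxc h.1)]
          simp [hfc, hf0 hxB]
        · have hxc : x ∈ Bᶜ := hxB
          rw [Set.indicator_of_mem hxc]
          by_cases hxF : x ∈ F
          · rw [Set.indicator_of_notMem (fun h => h.2 hxF)]
            simp [hfc, hf1 hxF]
          · rw [Set.indicator_of_mem (show x ∈ Bᶜ \ F from ⟨hxc, hxF⟩) (fun _ => (1 : ℝ))]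
            have h01 := hf01 x
            have hcast : (1 : ℂ) - fc x = ((1 - f x : ℝ) : ℂ) := by
              simp [hfc]
            rw [hcast, Complex.norm_real, norm_one, Real.norm_eq_abs,
              abs_of_nonneg (by linarith [h01.2])]
            linarith [h01.1]
      have heq : eLpNorm ((Bᶜ \ F).indicator fun _ => (1 : ℝ)) 2 μ
          = μ (Bᶜ \ F) ^ (1 / (2 : ℝ)) := by
        rw [eLpNorm_indicator_const (hBmeas.compl.diff hFcomp.isClosed.measurableSet)
          two_ne_zero ENNReal.ofNat_ne_top]
        simp
      have hlt : μ (Bᶜ \ F) ^ (1 / (2 : ℝ)) < ENNReal.ofReal ε := by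
        calc μ (Bᶜ \ F) ^ (1 / (2 : ℝ))
            < ((ENNReal.ofReal ε) ^ 2) ^ (1 / (2 : ℝ)) :=
              ENNReal.rpow_lt_rpow hμS (by norm_num)
          _ = ENNReal.ofReal ε := by
              rw [← ENNReal.rpow_natCast (ENNReal.ofReal ε) 2, ← ENNReal.rpow_mul]
              norm_num
      exact lt_of_le_of_lt (hle.trans_eq heq) hlt
    have : eLpNorm (⇑(indicatorConstLp 2 hBmeas.compl (measure_ne_top μ Bᶜ) (1 : ℂ)
        - ContinuousMap.toLp 2 μ ℂ fc)) 2 μ < ENNReal.ofReal ε := by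
      rwa [eLpNorm_congr_ae (Lp.coeFn_sub _ _)]
    exact ENNReal.toReal_lt_of_lt_ofReal this
  -- conclude
  have hproj : ((Submodule.orthogonalProjectionOnto Kᗮ u : Kᗮ) : Lp ℂ 2 μ) = v :=
    Submodule.eq_starProjection_of_mem_orthogonal hvK (K.le_orthogonal_orthogonal huvK)
  constructor
  · rw [hproj]
    exact indicatorConstLp_coeFn
  · intro g
    rw [hproj, hv, L2.inner_indicatorConstLp_one hBmeas hμB]
    exact setIntegral_congr_ae hBmeas ((ContinuousMap.coeFn_toLp (𝕜 := ℂ) μ g).mono fun x hx _ => hx)
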